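/- Let G be a precompact topological group. Then for every identity neighborhood U there exists a map α : G → Sym(G) with α(g)(h) ∈ U g h for all g, h ∈ G, such that the subgroup of Sym(G) generated by {α(g) | g ∈ G} is finite. -/

import Mathlib

/-- A topological group is precompact if every identity neighborhood `U` satisfies `UF = G`
for some finite `F ⊆ G`. -/
def PrecompactGroup (G : Type*) [Group G] [TopologicalSpace G] : Prop :=
  ∀ U ∈ nhds (1 : G), ∃ F : Finset G, ∀ x : G, ∃ u ∈ U, ∃ y ∈ F, x = u * y

open Cardinal

universe u


private lemma exists_good_W {G : Type*} [Group G] [TopologicalSpace G]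
    [IsTopologicalGroup G]
    (hpc : ∀ U ∈ nhds (1 : G), ∃ F : Finset G, ∀ x : G, ∃ u ∈ U, ∃ y ∈ F, x = u * y)
    {U : Set G} (hU : U ∈ nhds 1) :
    ∃ W : Set G, W ∈ nhds (1 : G) ∧ (∀ w ∈ W, w⁻¹ ∈ W) ∧
      (∀ (g : G), ∀ w ∈ W, g * w * g⁻¹ ∈ W) ∧
      (∀ a ∈ W, ∀ b ∈ W, ∀ c ∈ W, ∀ d ∈ W, a * b * c * d ∈ U) := by
  classical
  obtain ⟨V₁, hV₁, hV₁U⟩ := exists_nhds_one_split hU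
  obtain ⟨V₂, hV₂, hV₂V₁⟩ := exists_nhds_one_split hV₁
  set T : Set G := V₂ ∩ V₂⁻¹ with hT
  have hTmem : T ∈ nhds (1 : G) := Filter.inter_mem hV₂ (inv_mem_nhds_one G hV₂)
  have hTquad : ∀ a ∈ T, ∀ b ∈ T, ∀ c ∈ T, ∀ d ∈ T, a * b * c * d ∈ U := by
    intro a ha b hb c hc d hd
    have h1 : a * b ∈ V₁ := hV₂V₁ a ha.1 b hb.1
    have h2 : c * d ∈ V₁ := hV₂V₁ c hc.1 d hd.1
    have := hV₁U _ h1 _ h2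
    rwa [show a * b * (c * d) = a * b * c * d by group] at this
  -- triple split into T
  obtain ⟨A, hA, hAT⟩ := exists_nhds_one_split hTmem
  obtain ⟨S₀, hS₀, hS₀A⟩ := exists_nhds_one_split hA
  set S : Set G := S₀ ∩ A ∩ (S₀ ∩ A)⁻¹ with hS
  have hSmem : S ∈ nhds (1 : G) :=
    Filter.inter_mem (Filter.inter_mem hS₀ hA) (inv_mem_nhds_one G (Filter.inter_mem hS₀ hA))
  have hSsym : ∀ s ∈ S, s⁻¹ ∈ S := by
    intro s hs
    exact ⟨hs.2, by simpa using hs.1⟩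
  have hStriple : ∀ x ∈ S, ∀ y ∈ S, ∀ z ∈ S, x * y * z ∈ T := by
    intro x hx y hy z hz
    have h1 : y * z ∈ A := hS₀A y hy.1.1 z hz.1.1
    have := hAT x hx.1.2 _ h1
    rwa [show x * (y * z) = x * y * z by group] at this
  -- precompactness at scale S
  obtain ⟨F, hF⟩ := hpc S hSmem
  -- V₃ : conjugation by every f ∈ F lands in S
  set V₃ : Set G := ⋂ f ∈ F, (fun v => f * v * f⁻¹) ⁻¹' S with hV₃def
  have hV₃mem : V₃ ∈ nhds (1 : G) := by
    refine (Filter.biInter_mem F.finite_toSet).mpr ?_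
    intro f _
    have hc : Continuous (fun v : G => f * v * f⁻¹) := by continuity
    have : ContinuousAt (fun v : G => f * v * f⁻¹) 1 := hc.continuousAt
    have h1 : f * 1 * f⁻¹ = 1 := by group
    exact this.preimage_mem_nhds (by rwa [h1])
  have hV₃conj : ∀ (g : G), ∀ v ∈ V₃, g * v * g⁻¹ ∈ T := by
    intro g v hv
    obtain ⟨u, hu, f, hfF, hguf⟩ := hF g
    have hfv : f * v * f⁻¹ ∈ S := by
      have := Set.mem_iInter₂.mp hv f hfF
      exact this
    have hu' : u ∈ S := hu
    have hu'' : u⁻¹ ∈ S := hSsym u hu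
    have := hStriple u hu' _ hfv _ hu''
    rwa [show u * (f * v * f⁻¹) * u⁻¹ = (u * f) * v * (u * f)⁻¹ by group, ← hguf] at this
  set V₄ : Set G := V₃ ∩ V₃⁻¹ with hV₄
  have hV₄mem : V₄ ∈ nhds (1 : G) := Filter.inter_mem hV₃mem (inv_mem_nhds_one G hV₃mem)
  have hV₄sym : ∀ v ∈ V₄, v⁻¹ ∈ V₄ := fun v hv => ⟨hv.2, by simpa using hv.1⟩
  refine ⟨{x | ∃ g v, v ∈ V₄ ∧ x = g * v * g⁻¹}, ?_, ?_, ?_, ?_⟩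
  · refine Filter.mem_of_superset hV₄mem ?_
    intro v hv
    exact ⟨1, v, hv, by group⟩
  · rintro w ⟨g, v, hv, rfl⟩
    exact ⟨g, v⁻¹, hV₄sym v hv, by group⟩
  · rintro k w ⟨g, v, hv, rfl⟩
    exact ⟨k * g, v, hv, by group⟩
  · have hWT : ∀ x ∈ {x : G | ∃ g v, v ∈ V₄ ∧ x = g * v * g⁻¹}, x ∈ T := by
      rintro x ⟨g, v, hv, rfl⟩
      exact hV₃conj g v hv.1
    intro a ha b hb c hc d hd
    exact hTquad a (hWT a ha) b (hWT b hb) c (hWT c hc) d (hWT d hd)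

private lemma exists_big_fiber {α : Type u} {J : Type u} [Fintype J] (hα : ℵ₀ ≤ #α)
    (f : J → Set α) (A : Set α) (hA : #A = #α) (hcov : A ⊆ ⋃ j, f j) :
    ∃ j, #(f j) = #α := by
  classical
  by_contra hcon
  push_neg at hcon
  have hlt : ∀ j, #(f j) < #α := fun j => lt_of_le_of_ne (mk_set_le _) (hcon j)
  cases isEmpty_or_nonempty J with
  | inl h =>
    have : (⋃ j, f j) = (∅ : Set α) := by simp
    have hA0 : #A = 0 := by
      have := Cardinal.mk_le_mk_of_subset (this ▸ hcov)
      simpa using this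
    rw [hA0] at hA
    have : (0:Cardinal) < #α := lt_of_lt_of_le aleph0_pos hα
    exact absurd hA (this.ne)
  | inr h =>
    obtain ⟨j₀, _, hmax⟩ := Finset.exists_max_image Finset.univ (fun j => #(f j))
      Finset.univ_nonempty
    have h1 : #α ≤ #(⋃ j, f j) := by
      rw [← hA]; exact Cardinal.mk_le_mk_of_subset hcov
    have h2 : #(⋃ j, f j) ≤ Cardinal.sum (fun j => #(f j)) := Cardinal.mk_iUnion_le_sum_mk
    have h3 : Cardinal.sum (fun j => #(f j)) ≤ Cardinal.sum (fun _ : J => #(f j₀)) :=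
      Cardinal.sum_le_sum _ _ (fun j => hmax j (Finset.mem_univ j))
    have h4 : Cardinal.sum (fun _ : J => #(f j₀)) = #J * #(f j₀) := Cardinal.sum_const' _ _
    have h5 : #J * #(f j₀) < #α :=
      Cardinal.mul_lt_of_lt hα (lt_of_lt_of_le (Cardinal.lt_aleph0_of_finite J) hα) (hlt j₀)
    exact absurd ((h1.trans h2).trans (h3.trans_eq h4)) (not_le.mpr h5)

private lemma exists_split {α : Type u} (A : Set α) (hA : ℵ₀ ≤ #A) (m : ℕ) (hm : m ≠ 0) :
    ∃ P : Fin m → Set α, (∀ k, P k ⊆ A) ∧ (∀ k k' x, x ∈ P k → x ∈ P k' → k = k') ∧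
      ∀ k, #(P k) = #A := by
  classical
  have hcard : #(A × Fin m) = #A := by
    rw [Cardinal.mk_prod, Cardinal.lift_uzero, Cardinal.mk_fin, Cardinal.lift_natCast]
    exact Cardinal.mul_eq_left hA ((Cardinal.nat_lt_aleph0 m).le.trans hA)
      (by exact_mod_cast hm)
  obtain ⟨ee⟩ : Nonempty ((A : Set α) ≃ A × Fin m) := Cardinal.eq.mp hcard.symm
  refine ⟨fun k => Subtype.val '' {a : A | (ee a).2 = k}, ?_, ?_, ?_⟩
  · rintro k x ⟨a, _, rfl⟩; exact a.2
  · rintro k k' x ⟨a, ha, rfl⟩ ⟨a', ha', hval⟩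
    have : a = a' := Subtype.val_injective hval.symm
    rw [← ha, this, ha']
  · intro k
    rw [Cardinal.mk_image_eq Subtype.val_injective]
    have : {a : A | (ee a).2 = k} ≃ A := by
      refine Equiv.ofBijective (fun p => (ee p.1).1) ⟨?_, ?_⟩
      · rintro ⟨a, ha⟩ ⟨a', ha'⟩ hb
        have : ee a = ee a' := Prod.ext hb (ha.trans ha'.symm)
        exact Subtype.ext (ee.injective this)
      · intro b
        refine ⟨⟨ee.symm (b, k), by simp⟩, by simp⟩
    exact Cardinal.mk_congr this

private lemma exists_partition {α : Type u} {ι : Type u} [Fintype ι] (hα : ℵ₀ ≤ #α)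
    (cells : ι → Set α) (hcov : ∀ x, ∃ i, x ∈ cells i) (hcard : ∀ i, #(cells i) = #α) :
    ∃ idx : α → ι, (∀ x, x ∈ cells (idx x)) ∧ ∀ i, #{x | idx x = i} = #α := by
  classical
  set C : α → Finset ι := fun x => Finset.univ.filter (fun i => x ∈ cells i) with hC
  have hCmem : ∀ x i, i ∈ C x ↔ x ∈ cells i := by
    intro x i; simp [hC]
  -- for each i, find a "class" S (a full candidate-set) of full size containing i
  have hbig : ∀ i : ι, ∃ S : Finset ι, i ∈ S ∧ #{x | C x = S} = #α := by
    intro i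
    have hsub : cells i ⊆ ⋃ S : Finset ι, (if i ∈ S then {x | C x = S} else ∅) := by
      intro x hx
      refine Set.mem_iUnion.mpr ⟨C x, ?_⟩
      rw [if_pos ((hCmem x i).mpr hx)]
      exact rfl
    obtain ⟨S, hS⟩ := exists_big_fiber hα _ (cells i) (hcard i) hsub
    by_cases h : i ∈ S
    · rw [if_pos h] at hS
      exact ⟨S, h, hS⟩
    · rw [if_neg h] at hS
      exfalso
      rw [Cardinal.mk_emptyCollection] at hS
      exact absurd hS (lt_of_lt_of_le aleph0_pos hα).ne
  choose Sl hSlmem hSlcard using hbig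
  set users : Finset ι → Finset ι := fun S => Finset.univ.filter (fun i => Sl i = S) with husers
  -- split each used class into (users S).card many pieces of full size
  have hsplit : ∀ S : Finset ι, (users S).Nonempty →
      ∃ P : Fin (users S).card → Set α, (∀ k, P k ⊆ {x | C x = S}) ∧
        (∀ k k' x, x ∈ P k → x ∈ P k' → k = k') ∧ ∀ k, #(P k) = #α := by
    intro S hSne
    obtain ⟨i, hi⟩ := hSne
    have hSl : Sl i = S := by simpa [husers] using hi
    have hclass : #{x | C x = S} = #α := by rw [← hSl]; exact hSlcard i
    have hm : (users S).card ≠ 0 := by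
      simp only [ne_eq, Finset.card_eq_zero]
      exact fun h => by simp [h] at hi
    obtain ⟨P, hP1, hP2, hP3⟩ := exists_split {x | C x = S} (hclass ▸ hα) _ hm
    exact ⟨P, hP1, hP2, fun k => (hP3 k).trans hclass⟩
  choose Pf hPf1 hPf2 hPf3 using hsplit
  -- non-dependent version
  set Pf' : Finset ι → ℕ → Set α := fun S k =>
    if h : ∃ hne : (users S).Nonempty, k < (users S).card then Pf S h.choose ⟨k, h.choose_spec⟩
    else ∅ with hPf'
  have hPf'1 : ∀ S k, Pf' S k ⊆ {x | C x = S} := by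
    intro S k
    rw [hPf']
    by_cases h : ∃ hne : (users S).Nonempty, k < (users S).card
    · simp only [dif_pos h]; exact hPf1 _ _ _
    · simp only [dif_neg h]; exact Set.empty_subset _
  have hPf'2 : ∀ S k k' x, x ∈ Pf' S k → x ∈ Pf' S k' → k = k' := by
    intro S k k' x hx hx'
    rw [hPf'] at hx hx'
    by_cases h : ∃ hne : (users S).Nonempty, k < (users S).card
    · by_cases h' : ∃ hne : (users S).Nonempty, k' < (users S).card
      · simp only [dif_pos h] at hx
        simp only [dif_pos h'] at hx'
        have h2 : Pf S h'.choose ⟨k', h'.choose_spec⟩ = Pf S h.choose ⟨k', h'.choose_spec⟩ := rfl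
        rw [h2] at hx'
        have := hPf2 S h.choose _ _ x hx hx'
        exact congrArg Fin.val this
      · simp only [dif_neg h'] at hx'; exact absurd hx' (Set.notMem_empty x)
    · simp only [dif_neg h] at hx; exact absurd hx (Set.notMem_empty x)
  have hselfmem : ∀ i : ι, i ∈ users (Sl i) := by
    intro i; simp [husers]
  have hne : ∀ i : ι, (users (Sl i)).Nonempty := fun i => ⟨i, hselfmem i⟩
  set kOf : ι → ℕ := fun i => ((users (Sl i)).equivFin ⟨i, hselfmem i⟩ : Fin _) with hkOf
  have hkOflt : ∀ i, kOf i < (users (Sl i)).card := fun i => Fin.is_lt _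
  set T : ι → Set α := fun i => Pf' (Sl i) (kOf i) with hT
  have hTval : ∀ i, T i = Pf (Sl i) (hne i) ((users (Sl i)).equivFin ⟨i, hselfmem i⟩) := by
    intro i
    have h : ∃ hne : (users (Sl i)).Nonempty, kOf i < (users (Sl i)).card :=
      ⟨hne i, hkOflt i⟩
    simp only [hT, hPf', dif_pos h]
    rfl
  have hTclass : ∀ i, T i ⊆ {x | C x = Sl i} := fun i => hPf'1 _ _
  have hTsub : ∀ i, T i ⊆ cells i := by
    intro i x hx
    have : C x = Sl i := hTclass i hx
    exact (hCmem x i).mp (this ▸ hSlmem i)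
  have hTcard : ∀ i, #(T i) = #α := by
    intro i
    rw [hTval i]
    exact hPf3 _ _ _
  have key : ∀ (S S' : Finset ι) (h : S = S') (j : ι) (hj : j ∈ S) (hj' : j ∈ S'),
      ((S.equivFin ⟨j, hj⟩ : Fin S.card) : ℕ) = ((S'.equivFin ⟨j, hj'⟩ : Fin S'.card) : ℕ) := by
    rintro S S' rfl j hj hj'
    rfl
  have hTdisj : ∀ i i' x, x ∈ T i → x ∈ T i' → i = i' := by
    intro i i' x hx hx'
    have h1 : C x = Sl i := hTclass i hx
    have h2 : C x = Sl i' := hTclass i' hx'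
    have hSS : Sl i' = Sl i := h2.symm.trans h1
    have hx2 : x ∈ Pf' (Sl i) (kOf i) := hx
    have hx2' : x ∈ Pf' (Sl i) (kOf i') := by rw [← hSS]; exact hx'
    have hk : kOf i = kOf i' := hPf'2 _ _ _ _ hx2 hx2'
    have hmem' : i' ∈ users (Sl i) := by rw [← hSS]; exact hselfmem i'
    have e3 : kOf i' = (((users (Sl i)).equivFin ⟨i', hmem'⟩ : Fin _) : ℕ) :=
      key _ _ (congrArg users hSS) i' (hselfmem i') hmem'
    have e4 : ((users (Sl i)).equivFin ⟨i, hselfmem i⟩ : Fin _)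
        = ((users (Sl i)).equivFin ⟨i', hmem'⟩ : Fin _) :=
      Fin.ext (hk.trans e3)
    have := ((users (Sl i)).equivFin).injective e4
    exact congrArg Subtype.val this
  refine ⟨fun x => if h : ∃ i, x ∈ T i then h.choose else (hcov x).choose, ?_, ?_⟩
  · intro x
    by_cases h : ∃ i, x ∈ T i
    · simp only [dif_pos h]
      exact hTsub _ h.choose_spec
    · simp only [dif_neg h]
      exact (hcov x).choose_spec
  · intro i
    refine le_antisymm (mk_set_le _) ?_
    rw [← hTcard i]
    refine Cardinal.mk_le_mk_of_subset ?_
    intro x hx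
    have h : ∃ i, x ∈ T i := ⟨i, hx⟩
    simp only [Set.mem_setOf_eq, dif_pos h]
    exact hTdisj _ _ _ h.choose_spec hx



/-- In a precompact topological group, for every identity neighborhood `U` there is a map
`α : G → Sym(G)` with `α(g)(h) ∈ Ugh` for all `g, h`, whose image generates a finite
subgroup of `Sym(G)`. -/
theorem stmt_15 (G : Type*) [Group G] [TopologicalSpace G] [IsTopologicalGroup G]
    (hpc : PrecompactGroup G) :
    ∀ U ∈ nhds (1 : G), ∃ α : G → Equiv.Perm G,
      (∀ g h : G, α g h * (g * h)⁻¹ ∈ U) ∧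
      Set.Finite ((Subgroup.closure (Set.range α) : Subgroup (Equiv.Perm G)) : Set (Equiv.Perm G)) := by
  classical
  intro U hU
  cases finite_or_infinite G with
  | inl hfin =>
    refine ⟨fun g => Equiv.mulLeft g, ?_, Set.toFinite _⟩
    intro g h
    have h1 : (Equiv.mulLeft g) h * (g * h)⁻¹ = 1 := by
      simp only [Equiv.coe_mulLeft]
      group
    rw [h1]
    exact mem_of_mem_nhds hU
  | inr hinf =>
    obtain ⟨W, hWnhds, hWsym, hWconj, hWquad⟩ := exists_good_W hpc hU
    have hex : ∃ m, ∃ B : Finset G, (∀ x : G, ∃ y ∈ B, ∃ w ∈ W, x = w * y) ∧ B.card = m := by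
      obtain ⟨F₀, hF₀⟩ := hpc W hWnhds
      refine ⟨F₀.card, F₀, fun x => ?_, rfl⟩
      obtain ⟨u, hu, y, hy, hxy⟩ := hF₀ x
      exact ⟨y, hy, u, hu, hxy⟩
    set n := Nat.find hex with hn
    obtain ⟨E, hEcov, hEcard⟩ := Nat.find_spec hex
    have hmin : ∀ B : Finset G, (∀ x : G, ∃ y ∈ B, ∃ w ∈ W, x = w * y) → n ≤ B.card :=
      fun B hB => Nat.find_min' hex ⟨B, hB, rfl⟩
    set cells : {y // y ∈ E} → Set G := fun y => (fun w => w * (y : G)) '' W with hcells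
    have hcellmem : ∀ (x : G) (y : {y // y ∈ E}), x ∈ cells y ↔ ∃ w ∈ W, x = w * (y : G) := by
      intro x y
      constructor
      · rintro ⟨w, hw, rfl⟩; exact ⟨w, hw, rfl⟩
      · rintro ⟨w, hw, rfl⟩; exact ⟨w, hw, rfl⟩
    have hcov : ∀ x : G, ∃ y, x ∈ cells y := by
      intro x
      obtain ⟨y, hy, w, hw, hx⟩ := hEcov x
      exact ⟨⟨y, hy⟩, (hcellmem _ _).mpr ⟨w, hw, hx⟩⟩
    have hGinf : ℵ₀ ≤ #G := Cardinal.infinite_iff.mp hinf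
    have hWcard : #W = #G := by
      obtain ⟨y₀, hy₀⟩ := exists_big_fiber hGinf cells Set.univ Cardinal.mk_univ
        (fun x _ => Set.mem_iUnion.mpr (hcov x))
      rw [← hy₀, hcells]
      exact (Cardinal.mk_image_eq (mul_left_injective _)).symm
    have hcellcard : ∀ y, #(cells y) = #G := by
      intro y
      rw [hcells]
      rw [Cardinal.mk_image_eq (mul_left_injective _)]
      exact hWcard
    obtain ⟨idx, hidx, hfib⟩ := exists_partition hGinf cells hcov hcellcard
    have hσ : ∀ g : G, ∃ s : Equiv.Perm {y // y ∈ E}, ∀ y,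
        ∃ p q : G, idx p = s y ∧ idx q = y ∧ p = g * q := by
      intro g
      set r : {y // y ∈ E} → Finset {y // y ∈ E} := fun y => Finset.univ.filter
        (fun j => ∃ p q : G, idx p = j ∧ idx q = y ∧ p = g * q) with hr
      have hall : ∀ A : Finset {y // y ∈ E}, A.card ≤ (A.biUnion r).card := by
        intro A
        set NA := A.biUnion r with hNA
        set B : Finset G := NA.image (fun j : {y // y ∈ E} => g⁻¹ * (j : G)) ∪
          (Finset.univ \ A).image (fun y : {y // y ∈ E} => (y : G)) with hB
        have hcovB : ∀ x : G, ∃ y ∈ B, ∃ w ∈ W, x = w * y := by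
          intro x
          by_cases hmem : idx x ∈ A
          · set j := idx (g * x) with hj
            have hjr : j ∈ r (idx x) := by
              rw [hr]
              simp only [Finset.mem_filter, Finset.mem_univ, true_and]
              exact ⟨g * x, x, rfl, rfl, rfl⟩
            have hjNA : j ∈ NA := Finset.mem_biUnion.mpr ⟨idx x, hmem, hjr⟩
            obtain ⟨w, hw, hgx⟩ := (hcellmem (g * x) j).mp (hidx (g * x))
            refine ⟨g⁻¹ * (j : G), ?_, g⁻¹ * w * g, ?_, ?_⟩
            · exact Finset.mem_union_left _ (Finset.mem_image.mpr ⟨j, hjNA, rfl⟩)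
            · have := hWconj g⁻¹ w hw
              rwa [inv_inv] at this
            · have hx' : x = g⁻¹ * (w * (j : G)) := by
                rw [← hgx]; group
              rw [hx']; group
          · obtain ⟨w, hw, hx⟩ := (hcellmem x (idx x)).mp (hidx x)
            refine ⟨(idx x : G), ?_, w, hw, hx⟩
            exact Finset.mem_union_right _ (Finset.mem_image.mpr
              ⟨idx x, Finset.mem_sdiff.mpr ⟨Finset.mem_univ _, hmem⟩, rfl⟩)
        have h1 : n ≤ B.card := hmin B hcovB
        have h2 : B.card ≤ NA.card + (Finset.univ \ A).card :=
          (Finset.card_union_le _ _).trans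
            (by gcongr <;> exact Finset.card_image_le)
        have h3 : (Finset.univ \ A).card = Fintype.card {y // y ∈ E} - A.card := by
          rw [Finset.card_sdiff_of_subset (Finset.subset_univ A), Finset.card_univ]
        have h4 : Fintype.card {y // y ∈ E} = n := by
          rw [Fintype.card_coe, hEcard]
        have h5 : A.card ≤ n := h4 ▸ (Finset.card_le_univ A)
        omega
      obtain ⟨f, hfinj, hfr⟩ :=
        (Finset.all_card_le_biUnion_card_iff_exists_injective r).mp hall
      refine ⟨Equiv.ofBijective f (Finite.injective_iff_bijective.mp hfinj), ?_⟩
      intro y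
      have hy := hfr y
      rw [hr] at hy
      simp only [Finset.mem_filter, Finset.mem_univ, true_and] at hy
      exact hy
    choose σ hσspec using hσ
    have e : ∀ y, {x // idx x = y} ≃ G := by
      intro y
      have h : #({x | idx x = y} : Set G) = #G := hfib y
      exact (Cardinal.eq.mp h).some
    set θ : G ≃ {y // y ∈ E} × G :=
      (Equiv.sigmaFiberEquiv idx).symm.trans
        ((Equiv.sigmaCongrRight e).trans (Equiv.sigmaEquivProd {y // y ∈ E} G)) with hθ
    have θ_fst : ∀ x : G, (θ x).1 = idx x := fun x => rfl
    set Φfun : Equiv.Perm {y // y ∈ E} → Equiv.Perm G := fun s =>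
      θ.trans ((Equiv.prodCongr s (Equiv.refl G)).trans θ.symm) with hΦfun
    have hΦapp : ∀ (s : Equiv.Perm {y // y ∈ E}) (x : G),
        Φfun s x = θ.symm (s (θ x).1, (θ x).2) := fun s x => rfl
    have hmul : ∀ s t : Equiv.Perm {y // y ∈ E}, Φfun (s * t) = Φfun s * Φfun t := by
      intro s t
      ext x
      rw [Equiv.Perm.mul_apply, hΦapp, hΦapp, hΦapp, Equiv.apply_symm_apply]
      rfl
    set Φm : Equiv.Perm {y // y ∈ E} →* Equiv.Perm G := MonoidHom.mk' Φfun hmul with hΦm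
    refine ⟨fun g => Φm (σ g), ?_, ?_⟩
    · intro g h
      set z : G := Φm (σ g) h with hzdef
      have hθz : θ z = ((σ g) (θ h).1, (θ h).2) := by
        have hzz : z = Φfun (σ g) h := rfl
        rw [hzz, hΦapp, Equiv.apply_symm_apply]
      have hidxz : idx z = σ g (idx h) := by
        rw [← θ_fst z, hθz]
        show σ g (θ h).1 = σ g (idx h)
        rw [θ_fst h]
      obtain ⟨w1, hw1, hz1⟩ := (hcellmem z (idx z)).mp (hidx z)
      obtain ⟨w4, hw4, hh4⟩ := (hcellmem h (idx h)).mp (hidx h)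
      obtain ⟨p, q, hp, hq, hpq⟩ := hσspec g (idx h)
      obtain ⟨w2, hw2, hp2⟩ := (hcellmem p (idx p)).mp (hidx p)
      obtain ⟨w3, hw3, hq3⟩ := (hcellmem q (idx q)).mp (hidx q)
      rw [hp] at hp2
      rw [hq] at hq3
      rw [hidxz] at hz1
      set Y : G := ((idx h : {y // y ∈ E}) : G) with hYdef
      set Y' : G := ((σ g (idx h) : {y // y ∈ E}) : G) with hY'def
      have hpe : w2 * Y' = g * (w3 * Y) := by
        rw [← hp2, ← hq3, hpq]
      have hY' : Y' = w2⁻¹ * (g * (w3 * Y)) := by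
        rw [← hpe]; group
      have hgoal : z * (g * h)⁻¹ =
          w1 * w2⁻¹ * (g * w3 * g⁻¹) * (g * w4⁻¹ * g⁻¹) := by
        rw [hz1, hh4, hY']; group
      show z * (g * h)⁻¹ ∈ U
      rw [hgoal]
      exact hWquad _ hw1 _ (hWsym _ hw2) _ (hWconj g _ hw3) _ (hWconj g _ (hWsym _ hw4))
    · have hsub : Set.range (fun g => Φm (σ g)) ⊆ (Φm.range : Subgroup (Equiv.Perm G)) := by
        rintro x ⟨g, rfl⟩
        exact ⟨σ g, rfl⟩
      have hle := (Subgroup.closure_le Φm.range).mpr hsub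
      refine Set.Finite.subset (Set.finite_range Φm) ?_
      intro x hx
      obtain ⟨s, hs⟩ := hle hx
      exact ⟨s, hs⟩
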